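/- Correctness of the resources-distribution encoding: let K = (V,E,ℓ) be a Kripke structure, k ≥ 1, d ≥ 1, let c_1,…,c_k be fresh atomic propositions, and let Φres := ∃¹c_1.…∃¹c_k. AG( (⋁_{1≤i≤k} c_i) ∨ EX( (⋁_i c_i) ∨ EX( … ∨ EX(⋁_i c_i) ) ) ) with d nested EX modalities. Then for every state x, K,x ⊨ Φres if and only if there exist states t_1,…,t_k, each reachable from x, such that every state reachable from x can reach some t_i using at most d transitions. -/

import Mathlib

open Classical

/-- Syntax of QCTL: `φ ::= q | ¬φ | φ∨ψ | EX φ | E φ U ψ | A φ U ψ | ∃p.φ`. -/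
inductive QCTL (AP : Type) : Type where
  | atom : AP → QCTL AP
  | qneg : QCTL AP → QCTL AP
  | qor  : QCTL AP → QCTL AP → QCTL AP
  | qEX  : QCTL AP → QCTL AP
  | qEU  : QCTL AP → QCTL AP → QCTL AP
  | qAU  : QCTL AP → QCTL AP → QCTL AP
  | qexi : AP → QCTL AP → QCTL AP

/-- A Kripke structure over atomic propositions `AP` with (finite) state space `V`:
a serial edge relation and a labelling function. -/
structure Kripke (AP V : Type) where
  E : V → V → Prop
  serial : ∀ v, ∃ w, E v w
  label : V → Set AP

variable {AP V : Type}

/-- `K'` agrees with `K` (same edges) except possibly on the labelling of `p`. -/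
def Kripke.AgreeExcept (K K' : Kripke AP V) (p : AP) : Prop :=
  K'.E = K.E ∧ ∀ v q, q ≠ p → (q ∈ K'.label v ↔ q ∈ K.label v)

/-- Structure semantics of QCTL. -/
def QCTL.sat : QCTL AP → Kripke AP V → V → Prop
  | .atom p, K, x => p ∈ K.label x
  | .qneg φ, K, x => ¬ φ.sat K x
  | .qor φ ψ, K, x => φ.sat K x ∨ ψ.sat K x
  | .qEX φ, K, x => ∃ y, K.E x y ∧ φ.sat K y
  | .qEU φ ψ, K, x => ∃ ρ : ℕ → V, ρ 0 = x ∧ (∀ i, K.E (ρ i) (ρ (i + 1))) ∧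
      ∃ i, ψ.sat K (ρ i) ∧ ∀ j < i, φ.sat K (ρ j)
  | .qAU φ ψ, K, x => ∀ ρ : ℕ → V, ρ 0 = x → (∀ i, K.E (ρ i) (ρ (i + 1))) →
      ∃ i, ψ.sat K (ρ i) ∧ ∀ j < i, φ.sat K (ρ j)
  | .qexi p φ, K, x => ∃ K' : Kripke AP V, K.AgreeExcept K' p ∧ φ.sat K' x

namespace QCTL

def qand (φ ψ : QCTL AP) : QCTL AP := qneg (qor (qneg φ) (qneg ψ))
def qimp (φ ψ : QCTL AP) : QCTL AP := qor (qneg φ) ψ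
def qiff (φ ψ : QCTL AP) : QCTL AP := qand (qimp φ ψ) (qimp ψ φ)
def qtop [Inhabited AP] : QCTL AP := qor (atom default) (qneg (atom default))
def qbot [Inhabited AP] : QCTL AP := qneg qtop
def qAX (φ : QCTL AP) : QCTL AP := qneg (qEX (qneg φ))
def qEF [Inhabited AP] (φ : QCTL AP) : QCTL AP := qEU qtop φ
def qAG [Inhabited AP] (φ : QCTL AP) : QCTL AP := qneg (qEF (qneg φ))
def qall (p : AP) (φ : QCTL AP) : QCTL AP := qneg (qexi p (qneg φ))

/-- All atomic propositions occurring in a formula (free or bound). -/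
def atoms : QCTL AP → Set AP
  | atom p => {p}
  | qneg φ => φ.atoms
  | qor φ ψ => φ.atoms ∪ ψ.atoms
  | qEX φ => φ.atoms
  | qEU φ ψ => φ.atoms ∪ ψ.atoms
  | qAU φ ψ => φ.atoms ∪ ψ.atoms
  | qexi p φ => insert p φ.atoms

/-- Size of a formula. -/
def qsize : QCTL AP → ℕ
  | atom _ => 1
  | qneg φ => φ.qsize + 1
  | qor φ ψ => φ.qsize + ψ.qsize + 1
  | qEX φ => φ.qsize + 1
  | qEU φ ψ => φ.qsize + ψ.qsize + 1
  | qAU φ ψ => φ.qsize + ψ.qsize + 1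
  | qexi _ φ => φ.qsize + 1

end QCTL

/-- Equivalence of two QCTL formulas: same truth value at every state of every
(finite) Kripke structure. -/
def QEquiv (φ ψ : QCTL AP) : Prop :=
  ∀ (V : Type) [Fintype V] (K : Kripke AP V) (x : V), φ.sat K x ↔ ψ.sat K x

/-- `∃p₁.…∃pₙ.φ` for a list of atomic propositions. -/
def exiMany {AP : Type} (l : List AP) (φ : QCTL AP) : QCTL AP := l.foldr QCTL.qexi φ

/-- Conjunction of a list of formulas, with a final base conjunct. -/
def conjList {AP : Type} (l : List (QCTL AP)) (base : QCTL AP) : QCTL AP :=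
  l.foldr QCTL.qand base

/-- Disjunction of a list of formulas, with a final base disjunct. -/
def disjList {AP : Type} (l : List (QCTL AP)) (base : QCTL AP) : QCTL AP :=
  l.foldr QCTL.qor base
/-- `E_{=1}F(φ) := EF φ ∧ ∀q.( EF(q∧φ) → AG(φ→q) )`, with `q` a fresh atom. -/
def EuniqF {AP : Type} [Inhabited AP] (q : AP) (φ : QCTL AP) : QCTL AP :=
  QCTL.qand (QCTL.qEF φ)
    (QCTL.qall q
      (QCTL.qimp (QCTL.qEF (QCTL.qand (QCTL.atom q) φ))
        (QCTL.qAG (QCTL.qimp φ (QCTL.atom q)))))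

/-- `∀¹p.φ := ∀p.( E_{=1}F(p) → φ )`, with `q` the fresh atom used inside `E_{=1}F`. -/
def qall1 {AP : Type} [Inhabited AP] (p q : AP) (φ : QCTL AP) : QCTL AP :=
  QCTL.qall p (QCTL.qimp (EuniqF q (QCTL.atom p)) φ)

/-- `∃¹p.φ := ∃p.( E_{=1}F(p) ∧ φ )`, with `q` the fresh atom used inside `E_{=1}F`. -/
def qexi1 {AP : Type} [Inhabited AP] (p q : AP) (φ : QCTL AP) : QCTL AP :=
  QCTL.qexi p (QCTL.qand (EuniqF q (QCTL.atom p)) φ)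
/-- `d` nested `EX` modalities: `goal ∨ EX( goal ∨ EX( … ∨ EX goal ))`. -/
def nestEX {AP : Type} : ℕ → QCTL AP → QCTL AP
  | 0, b => b
  | n + 1, b => QCTL.qor b (QCTL.qEX (nestEX n b))

/-- `Φres := ∃¹c₁.…∃¹cₖ. AG( (⋁ᵢcᵢ) ∨ EX( (⋁ᵢcᵢ) ∨ EX( … ∨ EX(⋁ᵢcᵢ) ) ) )`
with `d` nested `EX` modalities; `q i` is the fresh atom used by the `i`-th `∃¹`. -/
def PhiRes {AP : Type} [Inhabited AP] (k d : ℕ) (c q : Fin k → AP) : QCTL AP :=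
  (List.finRange k).foldr (fun i acc => qexi1 (c i) (q i) acc)
    (QCTL.qAG (nestEX d
      (disjList ((List.finRange k).map fun i => QCTL.atom (c i)) QCTL.qbot)))

/-- `y` can reach `t` using at most `n` transitions. -/
def stepsLE {V : Type} (E : V → V → Prop) : ℕ → V → V → Prop
  | 0, a, b => a = b
  | n + 1, a, b => a = b ∨ ∃ c, E a c ∧ stepsLE E n c b

section Helpers

open Relation QCTL

variable {AP V : Type}

lemma exists_inf_path (K : Kripke AP V) (a : V) :
    ∃ ρ : ℕ → V, ρ 0 = a ∧ ∀ i, K.E (ρ i) (ρ (i + 1)) := by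
  choose f hf using K.serial
  refine ⟨fun i => f^[i] a, rfl, fun i => ?_⟩
  show K.E (f^[i] a) (f^[i+1] a)
  rw [Function.iterate_succ_apply']
  exact hf _

lemma path_reach (K : Kripke AP V) (ρ : ℕ → V)
    (hE : ∀ i, K.E (ρ i) (ρ (i + 1))) (i : ℕ) :
    ReflTransGen K.E (ρ 0) (ρ i) := by
  induction i with
  | zero => exact .refl
  | succ j ih => exact ih.tail (hE j)

lemma reach_exists_path (K : Kripke AP V) {x y : V} (h : ReflTransGen K.E x y) :
    ∃ (ρ : ℕ → V) (n : ℕ), ρ 0 = x ∧ ρ n = y ∧ ∀ i, K.E (ρ i) (ρ (i + 1)) := by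
  induction h using ReflTransGen.head_induction_on with
  | refl =>
    obtain ⟨ρ, h0, hE⟩ := exists_inf_path K y
    exact ⟨ρ, 0, h0, h0, hE⟩
  | @head a b hab _ ih =>
    obtain ⟨ρ, n, h0, hn, hE⟩ := ih
    refine ⟨fun i => match i with | 0 => a | j + 1 => ρ j, n + 1, rfl, hn, fun i => ?_⟩
    match i with
    | 0 => simpa [h0] using hab
    | j + 1 => exact hE j

lemma sat_qand (φ ψ : QCTL AP) (K : Kripke AP V) (x : V) :
    (qand φ ψ).sat K x ↔ φ.sat K x ∧ ψ.sat K x := by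
  simp [qand, QCTL.sat]

lemma sat_qimp (φ ψ : QCTL AP) (K : Kripke AP V) (x : V) :
    (qimp φ ψ).sat K x ↔ (φ.sat K x → ψ.sat K x) := by
  simp [qimp, QCTL.sat]; tauto

lemma sat_qtop [Inhabited AP] (K : Kripke AP V) (x : V) : (qtop : QCTL AP).sat K x := by
  simp [qtop, QCTL.sat]; tauto

lemma sat_qbot [Inhabited AP] (K : Kripke AP V) (x : V) : ¬ (qbot : QCTL AP).sat K x := by
  simp [qbot, qtop, QCTL.sat]

lemma sat_qEF [Inhabited AP] (φ : QCTL AP) (K : Kripke AP V) (x : V) :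
    (qEF φ).sat K x ↔ ∃ y, ReflTransGen K.E x y ∧ φ.sat K y := by
  constructor
  · rintro ⟨ρ, h0, hE, i, hi, -⟩
    exact ⟨ρ i, h0 ▸ path_reach K ρ hE i, hi⟩
  · rintro ⟨y, hr, hy⟩
    obtain ⟨ρ, n, h0, hn, hE⟩ := reach_exists_path K hr
    exact ⟨ρ, h0, hE, n, hn ▸ hy, fun _ _ => sat_qtop K _⟩

lemma sat_qAG [Inhabited AP] (φ : QCTL AP) (K : Kripke AP V) (x : V) :
    (qAG φ).sat K x ↔ ∀ y, ReflTransGen K.E x y → φ.sat K y := by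
  show ¬ (qEF (qneg φ)).sat K x ↔ _
  rw [sat_qEF]
  push_neg
  simp [QCTL.sat]

lemma sat_qall (p : AP) (φ : QCTL AP) (K : Kripke AP V) (x : V) :
    (qall p φ).sat K x ↔ ∀ K' : Kripke AP V, K.AgreeExcept K' p → φ.sat K' x := by
  show ¬ (∃ K' : Kripke AP V, K.AgreeExcept K' p ∧ ¬ φ.sat K' x) ↔ _
  push_neg
  rfl

lemma stepsLE_reach {E : V → V → Prop} :
    ∀ {n : ℕ} {a b : V}, stepsLE E n a b → ReflTransGen E a b := by
  intro n
  induction n with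
  | zero => intro a b h; exact h ▸ .refl
  | succ m ih =>
    rintro a b (rfl | ⟨c, hac, hcb⟩)
    · exact .refl
    · exact (ReflTransGen.single hac).trans (ih hcb)

lemma sat_nestEX (b : QCTL AP) (K : Kripke AP V) :
    ∀ (n : ℕ) (x : V), (nestEX n b).sat K x ↔ ∃ z, stepsLE K.E n x z ∧ b.sat K z := by
  intro n
  induction n with
  | zero =>
    intro x
    simp only [nestEX, stepsLE]
    constructor
    · exact fun h => ⟨x, rfl, h⟩
    · rintro ⟨z, rfl, h⟩; exact h
  | succ m ih =>
    intro x
    simp only [nestEX, QCTL.sat, stepsLE, ih]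
    constructor
    · rintro (h | ⟨y, hxy, z, hz, hb⟩)
      · exact ⟨x, Or.inl rfl, h⟩
      · exact ⟨z, Or.inr ⟨y, hxy, hz⟩, hb⟩
    · rintro ⟨z, (rfl | ⟨y, hxy, hz⟩), hb⟩
      · exact Or.inl hb
      · exact Or.inr ⟨y, hxy, z, hz, hb⟩

lemma sat_disjAtoms [Inhabited AP] (l : List AP) (K : Kripke AP V) (x : V) :
    (disjList (l.map QCTL.atom) QCTL.qbot).sat K x ↔ ∃ a ∈ l, a ∈ K.label x := by
  induction l with
  | nil => simpa [disjList] using sat_qbot K x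
  | cons a tl ih =>
    simp only [List.map_cons, disjList, List.foldr_cons, QCTL.sat]
    rw [show (List.foldr qor qbot (tl.map QCTL.atom)) = disjList (tl.map QCTL.atom) qbot from rfl, ih]
    simp [QCTL.sat]

lemma sat_EuniqF [Inhabited AP] {p q' : AP} (hpq : p ≠ q') (K : Kripke AP V) (x : V) :
    (EuniqF q' (QCTL.atom p)).sat K x ↔
      ∃ t, ReflTransGen K.E x t ∧ p ∈ K.label t ∧
        ∀ z, ReflTransGen K.E x z → p ∈ K.label z → z = t := by
  rw [show EuniqF q' (QCTL.atom p) = qand (qEF (QCTL.atom p))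
      (qall q' (qimp (qEF (qand (QCTL.atom q') (QCTL.atom p)))
        (qAG (qimp (QCTL.atom p) (QCTL.atom q'))))) from rfl,
    sat_qand, sat_qEF, sat_qall]
  constructor
  · rintro ⟨⟨t, ht, htp⟩, huniq⟩
    refine ⟨t, ht, htp, fun z hz hzp => ?_⟩
    -- relabel q' to hold exactly at z
    set K'' : Kripke AP V :=
      ⟨K.E, K.serial, fun v => if v = z then insert q' (K.label v) else K.label v \ {q'}⟩ with hK''
    have hagree : K.AgreeExcept K'' q' := by
      refine ⟨rfl, fun v a ha => ?_⟩
      by_cases hv : v = z <;> simp [hK'', hv, ha]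
    have h2 := huniq K'' hagree
    rw [sat_qimp, sat_qEF] at h2
    have hEF : ∃ y, ReflTransGen K''.E x y ∧ (qand (QCTL.atom q') (QCTL.atom p)).sat K'' y := by
      refine ⟨z, hz, ?_⟩
      rw [sat_qand]
      constructor <;> simp [QCTL.sat, hK'', hzp]
    have h3 := h2 hEF
    rw [sat_qAG] at h3
    have h4 := h3 t ht
    rw [sat_qimp] at h4
    have htp' : p ∈ K.label t := htp
    have h5 : (QCTL.atom p).sat K'' t := by
      show p ∈ K''.label t
      by_cases htz : t = z
      · simp [hK'', htz, hzp]
      · simp [hK'', htz, hpq, htp']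
    have h6 := h4 h5
    simp only [QCTL.sat, hK''] at h6
    by_cases htz : t = z
    · exact htz.symm
    · simp [htz] at h6
  · rintro ⟨t, ht, htp, huniq⟩
    refine ⟨⟨t, ht, htp⟩, fun K'' hagree => ?_⟩
    obtain ⟨hE'', hlab''⟩ := hagree
    rw [sat_qimp, sat_qEF, sat_qAG]
    rintro ⟨y, hy, hyqp⟩
    rw [sat_qand] at hyqp
    obtain ⟨hyq, hyp⟩ := hyqp
    simp only [QCTL.sat] at hyq hyp
    have hyp' : p ∈ K.label y := (hlab'' y p hpq).mp hyp
    have hyt : y = t := huniq y (hE'' ▸ hy) hyp'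
    intro w hw
    rw [sat_qimp]
    intro hwp
    simp only [QCTL.sat] at hwp ⊢
    have hwp' : p ∈ K.label w := (hlab'' w p hpq).mp hwp
    have : w = t := huniq w (hE'' ▸ hw) hwp'
    exact this ▸ hyt ▸ hyq

lemma fold_sat [Inhabited AP] {k : ℕ} (d : ℕ) (c q : Fin k → AP)
    (hcinj : Function.Injective c) (hcq : ∀ i j, c i ≠ q j)
    (K : Kripke AP V) (x : V) :
    ∀ (l : List (Fin k)), l.Nodup → ∀ (K' : Kripke AP V), K'.E = K.E →
      (∀ i ∈ l, ∀ v, c i ∉ K'.label v) →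
      ((l.foldr (fun i acc => qexi1 (c i) (q i) acc)
          (QCTL.qAG (nestEX d
            (disjList ((List.finRange k).map fun i => QCTL.atom (c i)) QCTL.qbot)))).sat K' x ↔
        ∃ t : Fin k → V, (∀ i ∈ l, ReflTransGen K.E x (t i)) ∧
          ∀ y, ReflTransGen K.E x y → ∃ z, stepsLE K.E d y z ∧
            ((∃ i ∈ l, z = t i) ∨ ∃ j, j ∉ l ∧ c j ∈ K'.label z)) := by
  have hmap : ((List.finRange k).map fun i => QCTL.atom (c i))
      = ((List.finRange k).map c).map QCTL.atom := by
    simp [List.map_map]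
  intro l
  induction l with
  | nil =>
    intro _ K' hE _
    simp only [List.foldr_nil]
    rw [sat_qAG]
    constructor
    · intro h
      refine ⟨fun _ => x, by simp, fun y hy => ?_⟩
      have := h y (hE ▸ hy)
      rw [sat_nestEX] at this
      obtain ⟨z, hz, hb⟩ := this
      rw [hmap, sat_disjAtoms] at hb
      obtain ⟨a, ha, hax⟩ := hb
      simp only [List.mem_map, List.mem_finRange] at ha
      obtain ⟨j, -, rfl⟩ := ha
      exact ⟨z, hE ▸ hz, Or.inr ⟨j, by simp, hax⟩⟩
    · rintro ⟨t, -, h⟩ y hy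
      obtain ⟨z, hz, hor⟩ := h y (hE ▸ hy)
      rw [sat_nestEX, hmap]
      refine ⟨z, hE ▸ hz, ?_⟩
      rw [sat_disjAtoms]
      rcases hor with ⟨i, hi, -⟩ | ⟨j, -, hj⟩
      · exact absurd hi List.not_mem_nil
      · exact ⟨c j, by simp, hj⟩
  | cons i tl ih =>
    intro hnd K' hE hfr
    have hitl : i ∉ tl := (List.nodup_cons.mp hnd).1
    have hndtl : tl.Nodup := (List.nodup_cons.mp hnd).2
    simp only [List.foldr_cons]
    rw [show (qexi1 (c i) (q i) (tl.foldr (fun i acc => qexi1 (c i) (q i) acc) _))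
        = QCTL.qexi (c i) (qand (EuniqF (q i) (QCTL.atom (c i)))
          (tl.foldr (fun i acc => qexi1 (c i) (q i) acc) _)) from rfl]
    constructor
    · rintro ⟨K₁, ⟨hE₁, hlab₁⟩, hsat⟩
      rw [sat_qand] at hsat
      obtain ⟨huni, hrest⟩ := hsat
      have hE₁' : K₁.E = K.E := hE₁.trans hE
      rw [sat_EuniqF (hcq i i)] at huni
      obtain ⟨ti, hti, htip, htiu⟩ := huni
      rw [hE₁'] at hti
      have hfr₁ : ∀ j ∈ tl, ∀ v, c j ∉ K₁.label v := by
        intro j hj v hjv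
        have hji : j ≠ i := fun h => hitl (h ▸ hj)
        have : c j ∈ K'.label v := (hlab₁ v (c j) (fun h => hji (hcinj h))).mp hjv
        exact hfr j (List.mem_cons_of_mem _ hj) v this
      obtain ⟨t', ht'r, ht'cov⟩ := (ih hndtl K₁ hE₁' hfr₁).mp hrest
      refine ⟨Function.update t' i ti, ?_, ?_⟩
      · intro j hj
        rcases List.mem_cons.mp hj with rfl | hj'
        · simpa using hti
        · have hji : j ≠ i := fun h => hitl (h ▸ hj')
          rw [Function.update_of_ne hji]
          exact ht'r j hj'
      · intro y hy
        obtain ⟨z, hz, hor⟩ := ht'cov y hy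
        have hzreach : ReflTransGen K.E x z := hy.trans (stepsLE_reach hz)
        refine ⟨z, hz, ?_⟩
        rcases hor with ⟨j, hj, rfl⟩ | ⟨j, hjtl, hjz⟩
        · have hji : j ≠ i := fun h => hitl (h ▸ hj)
          exact Or.inl ⟨j, List.mem_cons_of_mem _ hj, (Function.update_of_ne hji _ _).symm⟩
        · by_cases hji : j = i
          · subst hji
            have : z = ti := htiu z (hE₁' ▸ hzreach) hjz
            exact Or.inl ⟨j, List.mem_cons_self, by simp [this]⟩
          · have : c j ∈ K'.label z := (hlab₁ z (c j) (fun h => hji (hcinj h))).mp hjz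
            exact Or.inr ⟨j, by simp [hji, hjtl], this⟩
    · rintro ⟨t, htr, htcov⟩
      set K₁ : Kripke AP V :=
        ⟨K'.E, K'.serial, fun v => if v = t i then insert (c i) (K'.label v) else K'.label v⟩
        with hK₁
      have hagree : K'.AgreeExcept K₁ (c i) := by
        refine ⟨rfl, fun v a ha => ?_⟩
        by_cases hv : v = t i <;> simp [hK₁, hv, ha]
      have hE₁' : K₁.E = K.E := hE
      have hlabi : ∀ v, c i ∈ K₁.label v ↔ v = t i := by
        intro v
        by_cases hv : v = t i
        · simp [hK₁, hv]
        · simp only [hK₁, if_neg hv]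
          exact ⟨fun h => absurd h (hfr i (List.mem_cons_self) v), fun h => absurd h hv⟩
      refine ⟨K₁, hagree, ?_⟩
      rw [sat_qand]
      constructor
      · rw [sat_EuniqF (hcq i i)]
        refine ⟨t i, hE₁' ▸ htr i (List.mem_cons_self), (hlabi _).mpr rfl,
          fun z _ hz => (hlabi z).mp hz⟩
      · have hfr₁ : ∀ j ∈ tl, ∀ v, c j ∉ K₁.label v := by
          intro j hj v hjv
          have hji : j ≠ i := fun h => hitl (h ▸ hj)
          have : c j ∈ K'.label v := by
            by_cases hv : v = t i
            · simp only [hK₁, if_pos hv, Set.mem_insert_iff] at hjv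
              rcases hjv with h | h
              · exact absurd (hcinj h) hji
              · exact h
            · simpa [hK₁, hv] using hjv
          exact hfr j (List.mem_cons_of_mem _ hj) v this
        rw [ih hndtl K₁ hE₁' hfr₁]
        refine ⟨t, fun j hj => htr j (List.mem_cons_of_mem _ hj), fun y hy => ?_⟩
        obtain ⟨z, hz, hor⟩ := htcov y hy
        refine ⟨z, hz, ?_⟩
        rcases hor with ⟨j, hj, rfl⟩ | ⟨j, hjl, hjz⟩
        · rcases List.mem_cons.mp hj with rfl | hj'
          · exact Or.inr ⟨j, hitl, (hlabi _).mpr rfl⟩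
          · exact Or.inl ⟨j, hj', rfl⟩
        · have hjtl : j ∉ tl := fun h => hjl (List.mem_cons_of_mem _ h)
          have : c j ∈ K₁.label z := by
            show c j ∈ (if z = t i then insert (c i) (K'.label z) else K'.label z)
            split
            · exact Set.mem_insert_of_mem _ hjz
            · exact hjz
          exact Or.inr ⟨j, hjtl, this⟩

end Helpers

/-- Correctness of the resources-distribution encoding: `Φres` holds at `x` iff one can
choose `k` states reachable from `x` such that every state reachable from `x` can reach
one of them within at most `d` transitions. -/
theorem phiRes_correct {AP V : Type} [Inhabited AP] [Fintype V]
    (K : Kripke AP V) (x : V) (k d : ℕ) (hk : 1 ≤ k) (hd : 1 ≤ d)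
    (c q : Fin k → AP)
    (hcinj : Function.Injective c) (hqinj : Function.Injective q)
    (hcq : ∀ i j, c i ≠ q j)
    (hcfresh : ∀ i v, c i ∉ K.label v) (hqfresh : ∀ i v, q i ∉ K.label v) :
    (PhiRes k d c q).sat K x ↔
      (∃ t : Fin k → V,
        (∀ i, Relation.ReflTransGen K.E x (t i)) ∧
        (∀ y : V, Relation.ReflTransGen K.E x y → ∃ i, stepsLE K.E d y (t i))) := by
  rw [show PhiRes k d c q = (List.finRange k).foldr (fun i acc => qexi1 (c i) (q i) acc)
      (QCTL.qAG (nestEX d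
        (disjList ((List.finRange k).map fun i => QCTL.atom (c i)) QCTL.qbot))) from rfl,
    fold_sat d c q hcinj hcq K x (List.finRange k) (List.nodup_finRange k) K rfl
      (fun i _ v => hcfresh i v)]
  constructor
  · rintro ⟨t, htr, hcov⟩
    refine ⟨t, fun i => htr i (List.mem_finRange i), fun y hy => ?_⟩
    obtain ⟨z, hz, hor⟩ := hcov y hy
    rcases hor with ⟨i, -, rfl⟩ | ⟨j, -, hj⟩
    · exact ⟨i, hz⟩
    · exact absurd hj (hcfresh j z)
  · rintro ⟨t, htr, hcov⟩
    refine ⟨t, fun i _ => htr i, fun y hy => ?_⟩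
    obtain ⟨i, hi⟩ := hcov y hy
    exact ⟨t i, hi, Or.inl ⟨i, List.mem_finRange i, rfl⟩⟩
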